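/- arXiv:1402.0039 — 3 statements merged into one kernel-verified Lean document; each statement's English description precedes it below -/
import Mathlib

section
/- (Intertwining property of the body-bar rigidity matrix.) Let Γ be a group acting on finite types V and E, let h, t : E → V be Γ-equivariant maps (h(γ·e) = γ·h(e) and t(γ·e) = γ·t(e) for all γ ∈ Γ, e ∈ E), let ι be a finite index type, let σ : Γ → O(ι, ℝ) be a group homomorphism into the real orthogonal matrices indexed by ι, and let b : E → (ι → ℝ) satisfy b(γ·e) = σ(γ) · b(e) (matrix-vector product) for all γ ∈ Γ and e ∈ E. Define the rigidity matrix R, with rows indexed by E and columns indexed by V × ι, by R(e, (v,i)) = (if v = h(e) then b(e)_i else 0) − (if v = t(e) then b(e)_i else 0). For each γ ∈ Γ define the matrix M(γ), indexed by V × ι, by M(γ)((w,j),(v,i)) = σ(γ)_{j,i} if w = γ·v and 0 otherwise (this is the Kronecker product σ(γ) ⊗ P_V(γ)), and define the permutation matrix P_E(γ), indexed by E, by P_E(γ)(e,f) = 1 if e = γ·f and 0 otherwise. Then for every γ ∈ Γ, R · M(γ) = P_E(γ) · R; that is, R is an intertwiner of the representations σ ⊗ P_V and P_E. -/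
open Matrix

/-- Intertwining property of the body-bar rigidity matrix: if the edge directions `b`
are compatible with the symmetry, then the rigidity matrix `R` intertwines the
representation `σ ⊗ P_V` (on `V × ι`) and the permutation representation `P_E` (on `E`). -/
theorem rigidity_matrix_intertwiner {Γ V E ι : Type*} [Group Γ]
    [Fintype V] [Fintype E] [Fintype ι] [DecidableEq V] [DecidableEq E] [DecidableEq ι]
    [MulAction Γ V] [MulAction Γ E]
    (h t : E → V)
    (hh : ∀ (γ : Γ) (e : E), h (γ • e) = γ • h e)
    (ht : ∀ (γ : Γ) (e : E), t (γ • e) = γ • t e)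
    (σ : Γ →* Matrix ι ι ℝ) (hσ : ∀ γ : Γ, (σ γ)ᵀ * σ γ = 1)
    (b : E → ι → ℝ) (hb : ∀ (γ : Γ) (e : E), b (γ • e) = σ γ *ᵥ b e)
    (R : Matrix E (V × ι) ℝ)
    (hR : ∀ (e : E) (v : V) (i : ι),
      R e (v, i) = (if v = h e then b e i else 0) - (if v = t e then b e i else 0))
    (γ : Γ) :
    R * (Matrix.of fun (P Q : V × ι) =>
        if P.1 = γ • Q.1 then σ γ P.2 Q.2 else 0) =
      (Matrix.of fun (e f : E) => if e = γ • f then (1 : ℝ) else 0) * R := by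
  have hinv : σ γ⁻¹ = (σ γ)ᵀ := by
    have h1 : σ γ⁻¹ * σ γ = 1 := by rw [← _root_.map_mul, inv_mul_cancel, _root_.map_one]
    exact (Matrix.inv_eq_left_inv h1).symm.trans (Matrix.inv_eq_left_inv (hσ γ))
  ext e ⟨v, i⟩
  rw [Matrix.mul_apply, Matrix.mul_apply]
  -- RHS: sum over f collapses to f = γ⁻¹ • e
  have hRHS : ∑ f, (Matrix.of fun (e f : E) => if e = γ • f then (1 : ℝ) else 0) e f
      * R f (v, i) = R (γ⁻¹ • e) (v, i) := by
    rw [Finset.sum_eq_single (γ⁻¹ • e)]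
    · simp [smul_inv_smul]
    · intro f _ hf
      have : e ≠ γ • f := by
        intro hef
        exact hf (by rw [hef, inv_smul_smul])
      simp [Matrix.of_apply, this]
    · simp
  rw [hRHS]
  -- LHS: sum over first coordinate collapses to γ • v
  rw [Fintype.sum_prod_type]
  have hLHS : ∀ w : V, ∑ j, R e (w, j) *
      (Matrix.of fun (P Q : V × ι) => if P.1 = γ • Q.1 then σ γ P.2 Q.2 else 0) (w, j) (v, i)
      = if w = γ • v then ∑ j, R e (w, j) * σ γ j i else 0 := by
    intro w
    by_cases hw : w = γ • v <;> simp [Matrix.of_apply, hw]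
  simp only [hLHS]
  rw [Finset.sum_ite_eq' Finset.univ (γ • v)]
  simp only [Finset.mem_univ, if_true]
  -- now compute both sides explicitly
  have hbe : b (γ⁻¹ • e) i = ∑ j, σ γ j i * b e j := by
    have := hb γ⁻¹ e
    rw [hinv] at this
    rw [this, Matrix.mulVec, dotProduct]
    simp [Matrix.transpose_apply]
  have hhe : h e = γ • h (γ⁻¹ • e) := by rw [← hh, smul_inv_smul]
  have hte : t e = γ • t (γ⁻¹ • e) := by rw [← ht, smul_inv_smul]
  have hcond1 : (γ • v = h e) ↔ (v = h (γ⁻¹ • e)) := by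
    rw [hhe]; exact ⟨fun hq => smul_left_cancel γ hq, fun hq => by rw [hq]⟩
  have hcond2 : (γ • v = t e) ↔ (v = t (γ⁻¹ • e)) := by
    rw [hte]; exact ⟨fun hq => smul_left_cancel γ hq, fun hq => by rw [hq]⟩
  rw [hR (γ⁻¹ • e) v i, hbe]
  simp only [hR e, hcond1.symm, hcond2.symm]
  rw [Finset.sum_congr rfl (fun j _ => sub_mul _ _ _), Finset.sum_sub_distrib]
  congr 1 <;> by_cases h1 : γ • v = h e <;> by_cases h2 : γ • v = t e <;>
    simp [h1, h2, Finset.mul_sum, mul_comm]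
end

section
/- (Orbit reduction of the infinitesimal motion equations.) Let Γ be a group acting on sets V and E, let h, t : E → V be Γ-equivariant maps (h(γ·e) = γ·h(e) and t(γ·e) = γ·t(e)), let ι be a finite index type, let σ : Γ → O(ι, ℝ) be a group homomorphism into the real orthogonal matrices indexed by ι, let b : E → (ι → ℝ) satisfy b(γ·e) = σ(γ) · b(e) for all γ, e, and let χ : Γ → ℂˣ be a group homomorphism. Suppose m : V → (ι → ℂ) is χ-symmetric, i.e. m(γ·v) = χ(γ)⁻¹ · (σ(γ) · m(v)) for all γ ∈ Γ and v ∈ V, where σ(γ) acts on ℂ-valued vectors via its complexification. If for some edge e₀ ∈ E the bilinear dot product satisfies b(e₀) ⬝ (m(h(e₀)) − m(t(e₀))) = 0, then for every γ ∈ Γ also b(γ·e₀) ⬝ (m(h(γ·e₀)) − m(t(γ·e₀))) = 0. Consequently, a χ-symmetric map satisfies the motion equation for every edge of a Γ-orbit as soon as it satisfies it for one representative edge of that orbit. -/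
open Matrix

/-- Orbit reduction of the infinitesimal motion equations: a `χ`-symmetric map `m`
satisfies the motion equation for every edge of a `Γ`-orbit as soon as it satisfies it
for one representative edge of that orbit. -/
theorem motion_equation_orbit_reduction {Γ V E ι : Type*} [Group Γ] [Fintype ι]
    [MulAction Γ V] [MulAction Γ E]
    (h t : E → V)
    (hh : ∀ (γ : Γ) (e : E), h (γ • e) = γ • h e)
    (ht : ∀ (γ : Γ) (e : E), t (γ • e) = γ • t e)
    [DecidableEq ι]
    (σ : Γ →* Matrix ι ι ℝ) (hσ : ∀ γ : Γ, (σ γ)ᵀ * σ γ = 1)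
    (b : E → ι → ℝ) (hb : ∀ (γ : Γ) (e : E), b (γ • e) = σ γ *ᵥ b e)
    (χ : Γ →* ℂˣ) (m : V → ι → ℂ)
    (hm : ∀ (γ : Γ) (v : V),
      m (γ • v) = ((χ γ)⁻¹ : ℂˣ) • ((σ γ).map Complex.ofReal *ᵥ m v))
    (e₀ : E)
    (h0 : ∑ i, (b e₀ i : ℂ) * (m (h e₀) i - m (t e₀) i) = 0) :
    ∀ γ : Γ, ∑ i, (b (γ • e₀) i : ℂ) * (m (h (γ • e₀)) i - m (t (γ • e₀)) i) = 0 := by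
  intro γ
  set A : Matrix ι ι ℂ := (σ γ).map Complex.ofReal with hA
  set x : ι → ℂ := fun i => m (h e₀) i - m (t e₀) i with hx
  set u : ι → ℂ := fun j => (b e₀ j : ℂ) with hu
  have key : ∀ i, (b (γ • e₀) i : ℂ) * (m (h (γ • e₀)) i - m (t (γ • e₀)) i)
      = ((χ γ)⁻¹ : ℂˣ) • ((A *ᵥ u) i * (A *ᵥ x) i) := by
    intro i
    rw [hh, ht, hm, hm, hb]
    have hbC : ((σ γ *ᵥ b e₀) i : ℂ) = (A *ᵥ u) i := by
      simp [mulVec, dotProduct, A, u]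
    have hsub : (A *ᵥ m (h e₀)) i - (A *ᵥ m (t e₀)) i = (A *ᵥ x) i := by
      simp [mulVec, dotProduct, x, mul_sub, Finset.sum_sub_distrib]
    rw [hbC, ← hA]
    simp only [Pi.smul_apply, Units.smul_def, smul_eq_mul]
    rw [← hsub]; ring
  simp only [key, ← Finset.smul_sum]
  have hAA : Aᵀ * A = 1 := by
    ext i j
    have h1 := congrFun (congrFun (hσ γ) i) j
    simp only [Matrix.mul_apply, Matrix.one_apply, Matrix.transpose_apply] at h1 ⊢
    have : (∑ k, A k i * A k j) = ((∑ k, σ γ k i * σ γ k j : ℝ) : ℂ) := by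
      simp [A]
    rw [this, h1]
    split <;> simp
  have hdp : ∑ i, (A *ᵥ u) i * (A *ᵥ x) i = 0 := by
    have e1 : (A *ᵥ u) ⬝ᵥ (A *ᵥ x) = u ⬝ᵥ x := by
      rw [dotProduct_mulVec, show A *ᵥ u = u ᵥ* Aᵀ from (vecMul_transpose A u).symm,
        vecMul_vecMul, ← dotProduct_mulVec, hAA, one_mulVec]
    calc ∑ i, (A *ᵥ u) i * (A *ᵥ x) i = (A *ᵥ u) ⬝ᵥ (A *ᵥ x) := rfl
      _ = u ⬝ᵥ x := e1
      _ = 0 := h0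
  rw [hdp, smul_zero]
end

section
/- Let n ≥ 2, let M be an invertible n×n complex matrix, let ω ∈ ℂ, and let p ∈ ℂⁿ. Then (I − ω·(M⁻¹)^(2)) · w(p, Mp) = w(p, (M + ω·M⁻¹)p), where I denotes the identity matrix indexed by the pairs (i,j) with 1 ≤ i < j ≤ n. -/
open Matrix

/-- The second compound matrix of an `n × n` matrix `A`: rows and columns are indexed by
the pairs `(i, j)` with `i < j`, and the entry at `((i,j),(k,l))` is the determinant
`A i k * A j l - A i l * A j k` of the corresponding `2 × 2` submatrix of `A`. -/
def compound2 {R : Type*} [CommRing R] {n : ℕ} (A : Matrix (Fin n) (Fin n) R) :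
    Matrix {p : Fin n × Fin n // p.1 < p.2} {p : Fin n × Fin n // p.1 < p.2} R :=
  Matrix.of fun P Q =>
    A P.1.1 Q.1.1 * A P.1.2 Q.1.2 - A P.1.1 Q.1.2 * A P.1.2 Q.1.1

/-- The Plücker coordinates of the 2-extensor `x ∧ y`: the vector indexed by pairs
`(i, j)` with `i < j` whose `(i,j)`-entry is `x i * y j - x j * y i`. -/
def plucker {R : Type*} [CommRing R] {n : ℕ} (x y : Fin n → R) :
    {p : Fin n × Fin n // p.1 < p.2} → R :=
  fun P => x P.1.1 * y P.1.2 - x P.1.2 * y P.1.1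

lemma compound2_mulVec_plucker {n : ℕ} (A : Matrix (Fin n) (Fin n) ℂ) (x y : Fin n → ℂ) :
    compound2 A *ᵥ plucker x y = plucker (A *ᵥ x) (A *ᵥ y) := by
  funext P
  obtain ⟨⟨i, j⟩, hij⟩ := P
  set g : Fin n × Fin n → ℂ :=
    fun q => A i q.1 * A j q.2 * (x q.1 * y q.2 - x q.2 * y q.1) with hg
  have hRHS : plucker (A *ᵥ x) (A *ᵥ y) ⟨(i, j), hij⟩ = ∑ q : Fin n × Fin n, g q := by
    simp only [plucker, mulVec, dotProduct, hg, Fintype.sum_prod_type]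
    rw [Finset.sum_mul_sum, Finset.sum_mul_sum]
    rw [Finset.sum_comm (s := Finset.univ) (t := Finset.univ)
      (f := fun k l => (A j k * x k) * (A i l * y l))]
    rw [← Finset.sum_sub_distrib]
    refine Finset.sum_congr rfl fun k _ => ?_
    rw [← Finset.sum_sub_distrib]
    refine Finset.sum_congr rfl fun l _ => ?_
    ring
  have hterm : ∀ Q : {q : Fin n × Fin n // q.1 < q.2},
      compound2 A ⟨(i, j), hij⟩ Q * plucker x y Q = g Q.1 + g Q.1.swap := by
    intro Q
    simp only [compound2, plucker, Matrix.of_apply, hg, Prod.fst_swap, Prod.snd_swap]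
    ring
  have hLHS : (compound2 A *ᵥ plucker x y) ⟨(i, j), hij⟩ =
      ∑ q ∈ Finset.univ.filter (fun q : Fin n × Fin n => q.1 < q.2), (g q + g q.swap) := by
    rw [mulVec, dotProduct]
    rw [Finset.sum_congr rfl (fun Q _ => hterm Q)]
    exact (Finset.sum_subtype _ (fun q => by simp) (fun q => g q + g q.swap)).symm
  rw [hLHS, hRHS]
  have hswap : ∑ q ∈ Finset.univ.filter (fun q : Fin n × Fin n => q.2 < q.1), g q =
      ∑ q ∈ Finset.univ.filter (fun q : Fin n × Fin n => q.1 < q.2), g q.swap := by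
    refine Finset.sum_nbij' Prod.swap Prod.swap ?_ ?_ ?_ ?_ ?_
    · intro q hq; simp only [Finset.mem_filter, Finset.mem_univ, true_and,
        Prod.fst_swap, Prod.snd_swap] at *; exact hq
    · intro q hq; simp only [Finset.mem_filter, Finset.mem_univ, true_and,
        Prod.fst_swap, Prod.snd_swap] at *; exact hq
    · intro q _; exact Prod.swap_swap q
    · intro q _; exact Prod.swap_swap q
    · intro q _; rw [Prod.swap_swap]
  have hsplit : ∑ q : Fin n × Fin n, g q =
      ∑ q ∈ Finset.univ.filter (fun q : Fin n × Fin n => q.1 < q.2), g q +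
      ∑ q ∈ Finset.univ.filter (fun q : Fin n × Fin n => ¬ q.1 < q.2), g q :=
    (Finset.sum_filter_add_sum_filter_not _ _ _).symm
  have hnot : ∑ q ∈ Finset.univ.filter (fun q : Fin n × Fin n => ¬ q.1 < q.2), g q =
      ∑ q ∈ Finset.univ.filter (fun q : Fin n × Fin n => q.2 < q.1), g q := by
    rw [← Finset.sum_filter_add_sum_filter_not
      (Finset.univ.filter (fun q : Fin n × Fin n => ¬ q.1 < q.2))
      (fun q : Fin n × Fin n => q.2 < q.1) g]
    have hz : ∑ q ∈ (Finset.univ.filter (fun q : Fin n × Fin n => ¬ q.1 < q.2)).filter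
        (fun q => ¬ q.2 < q.1), g q = 0 := by
      refine Finset.sum_eq_zero fun q hq => ?_
      simp only [Finset.mem_filter, Finset.mem_univ, true_and, not_lt] at hq
      have h12 : q.1 = q.2 := le_antisymm hq.2 hq.1
      simp [hg, h12]
    rw [hz, add_zero, Finset.filter_filter]
    congr 1
    ext q
    simp only [Finset.mem_filter, Finset.mem_univ, true_and, not_lt]
    exact ⟨fun h => h.2, fun h => ⟨le_of_lt h, h⟩⟩
  rw [hsplit, hnot, hswap, ← Finset.sum_add_distrib]

theorem one_sub_smul_compound2_inv_mulVec (n : ℕ) (hn : 2 ≤ n)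
    (M : Matrix (Fin n) (Fin n) ℂ) (hM : IsUnit M.det) (ω : ℂ) (p : Fin n → ℂ) :
    (1 - ω • compound2 M⁻¹) *ᵥ plucker p (M *ᵥ p) =
      plucker p ((M + ω • M⁻¹) *ᵥ p) := by
  have h1 : M⁻¹ *ᵥ (M *ᵥ p) = p := by
    rw [mulVec_mulVec, nonsing_inv_mul M hM, one_mulVec]
  rw [sub_mulVec, one_mulVec, smul_mulVec, compound2_mulVec_plucker, h1]
  funext P
  simp only [plucker, Pi.sub_apply, Pi.smul_apply, add_mulVec, smul_mulVec,
    Pi.add_apply, smul_eq_mul]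
  ring
end
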